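/- Let a ∈ ℝ, γ_c = (1,0) ∈ ℝ^{1×2}, 𝓛 : [0,1] → ℝ continuous, and for θ ∈ ℝ let f(·,θ) : [0,1] → ℝ^{1×2} be the unique solution of f″(x,θ) = f(x,θ) S_c(θ) − a f(x,θ) − 𝓛(x)γ_c with f(0,θ) = γ_c, f′(0,θ) = 0. Then for every C₆ > 0 there exists L₁ > 0 such that for all θ₁, θ₂ ∈ [−C₆, C₆]: sup_{x∈[0,1]} ‖f(x,θ₁) − f(x,θ₂)‖ ≤ L₁|θ₁ − θ₂| and ‖f′(1,θ₁) − f′(1,θ₂)‖ ≤ L₁|θ₁ − θ₂|. -/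

import Mathlib

open Matrix

/-- The canonical-form matrix `S_c(θ) = [[0, 1], [-θ, 0]]`. -/
def Sc (θ : ℝ) : Matrix (Fin 2) (Fin 2) ℝ := !![0, 1; -θ, 0]

lemma vecMul_Sc (v : Fin 2 → ℝ) (θ : ℝ) :
    Matrix.vecMul v (Sc θ) = ![-θ * v 1, v 0] := by
  funext j
  fin_cases j <;>
    simp [Sc, Matrix.vecMul, dotProduct, Fin.sum_univ_two] <;> ring

lemma pi2_norm_le {v : Fin 2 → ℝ} {c : ℝ} (h0 : |v 0| ≤ c) (h1 : |v 1| ≤ c) : ‖v‖ ≤ c := by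
  have hc : 0 ≤ c := le_trans (abs_nonneg _) h0
  rw [pi_norm_le_iff_of_nonneg hc]
  intro i; fin_cases i <;> simpa [Real.norm_eq_abs]

lemma abs_sub_sub_le' (x y z : ℝ) : |x - y - z| ≤ |x| + |y| + |z| := by
  calc |x - y - z| ≤ |x - y| + |z| := abs_sub _ _
    _ ≤ |x| + |y| + |z| := by linarith [abs_sub x y]

lemma gronwallBound_mono_x {δ K ε x y : ℝ} (hδ : 0 ≤ δ) (hK : 0 < K) (hε : 0 ≤ ε)
    (hxy : x ≤ y) : gronwallBound δ K ε x ≤ gronwallBound δ K ε y := by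
  rw [gronwallBound_of_K_ne_0 hK.ne']
  dsimp only
  have h := Real.exp_le_exp.2 (mul_le_mul_of_nonneg_left hxy hK.le)
  have h2 : 0 ≤ ε / K := div_nonneg hε hK.le
  nlinarith


set_option maxHeartbeats 1000000 in
/-- local Lipschitz dependence on `θ` of the solution of
`f″(x,θ) = f(x,θ)S_c(θ) - a f(x,θ) - 𝓛(x)γ_c`, `f(0,θ) = γ_c = (1,0)`, `f′(0,θ) = 0`:
for every `C₆ > 0` there is `L₁ > 0` such that for all `θ₁, θ₂ ∈ [-C₆, C₆]`,
`sup_{x∈[0,1]} ‖f(x,θ₁) - f(x,θ₂)‖ ≤ L₁|θ₁-θ₂|` and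
`‖f′(1,θ₁) - f′(1,θ₂)‖ ≤ L₁|θ₁-θ₂|`. -/
theorem stmt19 (a : ℝ) (𝓛 : ℝ → ℝ) (h𝓛 : ContinuousOn 𝓛 (Set.Icc 0 1))
    (f f' : ℝ → ℝ → (Fin 2 → ℝ))
    (hsol : ∀ θ : ℝ,
      f 0 θ = ![1, 0] ∧ f' 0 θ = 0 ∧
      ∀ x ∈ Set.Icc (0 : ℝ) 1,
        HasDerivAt (fun y => f y θ) (f' x θ) x ∧
        HasDerivAt (fun y => f' y θ)
          (Matrix.vecMul (f x θ) (Sc θ) - a • f x θ - 𝓛 x • (![1, 0] : Fin 2 → ℝ)) x)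
    (C₆ : ℝ) (hC₆ : 0 < C₆) :
    ∃ L₁ > 0, ∀ θ₁ ∈ Set.Icc (-C₆) C₆, ∀ θ₂ ∈ Set.Icc (-C₆) C₆,
      (∀ x ∈ Set.Icc (0 : ℝ) 1, ‖f x θ₁ - f x θ₂‖ ≤ L₁ * |θ₁ - θ₂|) ∧
      ‖f' 1 θ₁ - f' 1 θ₂‖ ≤ L₁ * |θ₁ - θ₂| := by
  obtain ⟨C, hC⟩ := isCompact_Icc.exists_bound_of_continuousOn h𝓛
  set L : ℝ := max C 0 with hLdef
  have hL0 : 0 ≤ L := le_max_right _ _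
  have hLb : ∀ x ∈ Set.Icc (0:ℝ) 1, |𝓛 x| ≤ L := fun x hx =>
    le_trans (by simpa [Real.norm_eq_abs] using hC x hx) (le_max_left _ _)
  set K : ℝ := 1 + C₆ + |a| with hKdef
  have hK : 0 < K := by positivity
  have hK1 : 1 ≤ K := by
    have := abs_nonneg a; simp only [hKdef]; linarith
  set M : ℝ := gronwallBound 1 K L 1 with hMdef
  have hM0 : 0 ≤ M := by
    rw [hMdef, gronwallBound_of_K_ne_0 hK.ne']
    dsimp only
    have h1 : (1:ℝ) ≤ Real.exp (K * 1) := by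
      rw [mul_one]; exact Real.one_le_exp hK.le
    have h2 : 0 ≤ L / K := div_nonneg hL0 hK.le
    nlinarith
  -- a priori bound on solutions
  have apriori : ∀ θ ∈ Set.Icc (-C₆) C₆, ∀ x ∈ Set.Icc (0:ℝ) 1,
      ‖f x θ‖ ≤ M ∧ ‖f' x θ‖ ≤ M := by
    intro θ hθ
    have hθabs : |θ| ≤ C₆ := abs_le.2 ⟨hθ.1, hθ.2⟩
    obtain ⟨h0, h0', hd⟩ := hsol θ
    set F : ℝ → (Fin 2 → ℝ) × (Fin 2 → ℝ) := fun x => (f x θ, f' x θ) with hFdef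
    set F' : ℝ → (Fin 2 → ℝ) × (Fin 2 → ℝ) := fun x =>
      (f' x θ, Matrix.vecMul (f x θ) (Sc θ) - a • f x θ - 𝓛 x • ![1, 0]) with hF'def
    have hFd : ∀ x ∈ Set.Icc (0:ℝ) 1, HasDerivAt F (F' x) x := fun x hx =>
      ((hd x hx).1.prodMk (hd x hx).2)
    have hFc : ContinuousOn F (Set.Icc 0 1) := fun x hx =>
      (hFd x hx).continuousAt.continuousWithinAt
    have hF0 : ‖F 0‖ ≤ 1 := by
      rw [Prod.norm_def]
      apply max_le
      · simp only [hFdef, h0]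
        exact pi2_norm_le (by norm_num) (by norm_num)
      · simp [hFdef, h0']
    have hbd : ∀ x ∈ Set.Ico (0:ℝ) 1, ‖F' x‖ ≤ K * ‖F x‖ + L := by
      intro x hx
      have hx' : x ∈ Set.Icc (0:ℝ) 1 := Set.mem_Icc_of_Ico hx
      have hFnn : 0 ≤ ‖F x‖ := norm_nonneg _
      have h1 : ‖f x θ‖ ≤ ‖F x‖ := norm_fst_le (F x)
      have h2 : ‖f' x θ‖ ≤ ‖F x‖ := norm_snd_le (F x)
      have hu0 : |f x θ 0| ≤ ‖F x‖ :=
        le_trans (by simpa using norm_le_pi_norm (f x θ) 0) h1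
      have hu1 : |f x θ 1| ≤ ‖F x‖ :=
        le_trans (by simpa using norm_le_pi_norm (f x θ) 1) h1
      have h𝓛x := hLb x hx'
      rw [Prod.norm_def]
      apply max_le
      · calc ‖f' x θ‖ ≤ ‖F x‖ := h2
          _ ≤ K * ‖F x‖ + L := by nlinarith
      · show ‖Matrix.vecMul (f x θ) (Sc θ) - a • f x θ - 𝓛 x • ![1, 0]‖ ≤ K * ‖F x‖ + L
        rw [vecMul_Sc]
        apply pi2_norm_le
        · have he : ((![-θ * f x θ 1, f x θ 0] - a • f x θ - 𝓛 x • ![1, 0] : Fin 2 → ℝ)) 0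
              = -θ * f x θ 1 - a * f x θ 0 - 𝓛 x := by
            simp [Matrix.vecHead, Matrix.vecTail]
          rw [he]
          refine le_trans (abs_sub_sub_le' _ _ _) ?_
          rw [neg_mul, abs_neg, abs_mul, abs_mul]
          have e1 : |θ| * |f x θ 1| ≤ C₆ * ‖F x‖ :=
            mul_le_mul hθabs hu1 (abs_nonneg _) hC₆.le
          have e2 : |a| * |f x θ 0| ≤ |a| * ‖F x‖ :=
            mul_le_mul_of_nonneg_left hu0 (abs_nonneg _)
          simp only [hKdef]; nlinarith
        · have he : ((![-θ * f x θ 1, f x θ 0] - a • f x θ - 𝓛 x • ![1, 0] : Fin 2 → ℝ)) 1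
              = f x θ 0 - a * f x θ 1 - 0 := by
            simp [Matrix.vecHead, Matrix.vecTail]
          rw [he]
          refine le_trans (abs_sub_sub_le' _ _ _) ?_
          rw [abs_mul]
          have e2 : |a| * |f x θ 1| ≤ |a| * ‖F x‖ :=
            mul_le_mul_of_nonneg_left hu1 (abs_nonneg _)
          simp only [hKdef, abs_zero]; nlinarith
    have key := norm_le_gronwallBound_of_norm_deriv_right_le hFc
      (fun x hx => (hFd x (Set.mem_Icc_of_Ico hx)).hasDerivWithinAt) hF0 hbd
    intro x hx
    have hkx := key x hx
    have hb : gronwallBound 1 K L (x - 0) ≤ M := by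
      rw [sub_zero]; exact gronwallBound_mono_x zero_le_one hK hL0 hx.2
    exact ⟨le_trans (norm_fst_le (F x)) (le_trans hkx hb),
      le_trans (norm_snd_le (F x)) (le_trans hkx hb)⟩
  -- Lipschitz constant
  refine ⟨max (M * (Real.exp K - 1) / K) 1, lt_of_lt_of_le one_pos (le_max_right _ _), ?_⟩
  set L₁ : ℝ := max (M * (Real.exp K - 1) / K) 1 with hL₁def
  intro θ₁ hθ₁ θ₂ hθ₂
  have hθ₁abs : |θ₁| ≤ C₆ := abs_le.2 ⟨hθ₁.1, hθ₁.2⟩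
  obtain ⟨h01, h01', hd1⟩ := hsol θ₁
  obtain ⟨h02, h02', hd2⟩ := hsol θ₂
  set G : ℝ → (Fin 2 → ℝ) × (Fin 2 → ℝ) := fun x =>
    (f x θ₁ - f x θ₂, f' x θ₁ - f' x θ₂) with hGdef
  set G' : ℝ → (Fin 2 → ℝ) × (Fin 2 → ℝ) := fun x =>
    (f' x θ₁ - f' x θ₂,
      (Matrix.vecMul (f x θ₁) (Sc θ₁) - a • f x θ₁ - 𝓛 x • ![1, 0]) -
      (Matrix.vecMul (f x θ₂) (Sc θ₂) - a • f x θ₂ - 𝓛 x • ![1, 0])) with hG'def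
  have hGd : ∀ x ∈ Set.Icc (0:ℝ) 1, HasDerivAt G (G' x) x := fun x hx =>
    (((hd1 x hx).1.sub (hd2 x hx).1).prodMk ((hd1 x hx).2.sub (hd2 x hx).2))
  have hGc : ContinuousOn G (Set.Icc 0 1) := fun x hx =>
    (hGd x hx).continuousAt.continuousWithinAt
  have hG0 : ‖G 0‖ ≤ 0 := by
    simp [hGdef, h01, h02, h01', h02']
  have hbd : ∀ x ∈ Set.Ico (0:ℝ) 1, ‖G' x‖ ≤ K * ‖G x‖ + M * |θ₁ - θ₂| := by
    intro x hx
    have hx' : x ∈ Set.Icc (0:ℝ) 1 := Set.mem_Icc_of_Ico hx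
    have hGnn : 0 ≤ ‖G x‖ := norm_nonneg _
    have hMθ : 0 ≤ M * |θ₁ - θ₂| := mul_nonneg hM0 (abs_nonneg _)
    have h1 : ‖f x θ₁ - f x θ₂‖ ≤ ‖G x‖ := norm_fst_le (G x)
    have h2 : ‖f' x θ₁ - f' x θ₂‖ ≤ ‖G x‖ := norm_snd_le (G x)
    have hg0 : |f x θ₁ 0 - f x θ₂ 0| ≤ ‖G x‖ :=
      le_trans (by simpa using norm_le_pi_norm (f x θ₁ - f x θ₂) 0) h1
    have hg1 : |f x θ₁ 1 - f x θ₂ 1| ≤ ‖G x‖ :=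
      le_trans (by simpa using norm_le_pi_norm (f x θ₁ - f x θ₂) 1) h1
    have hv1 : |f x θ₂ 1| ≤ M :=
      le_trans (by simpa using norm_le_pi_norm (f x θ₂) 1) ((apriori θ₂ hθ₂ x hx').1)
    rw [Prod.norm_def]
    apply max_le
    · calc ‖f' x θ₁ - f' x θ₂‖ ≤ ‖G x‖ := h2
        _ ≤ K * ‖G x‖ + M * |θ₁ - θ₂| := by nlinarith
    · show ‖(Matrix.vecMul (f x θ₁) (Sc θ₁) - a • f x θ₁ - 𝓛 x • ![1, 0]) -
          (Matrix.vecMul (f x θ₂) (Sc θ₂) - a • f x θ₂ - 𝓛 x • ![1, 0])‖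
          ≤ K * ‖G x‖ + M * |θ₁ - θ₂|
      rw [vecMul_Sc, vecMul_Sc]
      apply pi2_norm_le
      · have he : (((![-θ₁ * f x θ₁ 1, f x θ₁ 0] - a • f x θ₁ - 𝓛 x • ![1, 0]) -
            (![-θ₂ * f x θ₂ 1, f x θ₂ 0] - a • f x θ₂ - 𝓛 x • ![1, 0]) : Fin 2 → ℝ)) 0
            = -θ₁ * (f x θ₁ 1 - f x θ₂ 1) - (θ₁ - θ₂) * f x θ₂ 1
              - a * (f x θ₁ 0 - f x θ₂ 0) := by
          simp [Matrix.vecHead, Matrix.vecTail]; ring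
        rw [he]
        refine le_trans (abs_sub_sub_le' _ _ _) ?_
        rw [neg_mul, abs_neg, abs_mul, abs_mul, abs_mul]
        have t1 : |θ₁| * |f x θ₁ 1 - f x θ₂ 1| ≤ C₆ * ‖G x‖ :=
          mul_le_mul hθ₁abs hg1 (abs_nonneg _) hC₆.le
        have t2 : |θ₁ - θ₂| * |f x θ₂ 1| ≤ M * |θ₁ - θ₂| := by
          rw [mul_comm]; exact mul_le_mul_of_nonneg_right hv1 (abs_nonneg _)
        have t3 : |a| * |f x θ₁ 0 - f x θ₂ 0| ≤ |a| * ‖G x‖ :=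
          mul_le_mul_of_nonneg_left hg0 (abs_nonneg _)
        simp only [hKdef]; nlinarith
      · have he : (((![-θ₁ * f x θ₁ 1, f x θ₁ 0] - a • f x θ₁ - 𝓛 x • ![1, 0]) -
            (![-θ₂ * f x θ₂ 1, f x θ₂ 0] - a • f x θ₂ - 𝓛 x • ![1, 0]) : Fin 2 → ℝ)) 1
            = (f x θ₁ 0 - f x θ₂ 0) - a * (f x θ₁ 1 - f x θ₂ 1) - 0 := by
          simp [Matrix.vecHead, Matrix.vecTail]; ring
        rw [he]
        refine le_trans (abs_sub_sub_le' _ _ _) ?_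
        rw [abs_mul]
        have t3 : |a| * |f x θ₁ 1 - f x θ₂ 1| ≤ |a| * ‖G x‖ :=
          mul_le_mul_of_nonneg_left hg1 (abs_nonneg _)
        simp only [hKdef, abs_zero]; nlinarith
  have key := norm_le_gronwallBound_of_norm_deriv_right_le hGc
    (fun x hx => (hGd x (Set.mem_Icc_of_Ico hx)).hasDerivWithinAt) hG0 hbd
  have hfinal : ∀ x ∈ Set.Icc (0:ℝ) 1, ‖G x‖ ≤ L₁ * |θ₁ - θ₂| := by
    intro x hx
    have hkx := key x hx
    have hMθ : 0 ≤ M * |θ₁ - θ₂| := mul_nonneg hM0 (abs_nonneg _)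
    have hb : gronwallBound 0 K (M * |θ₁ - θ₂|) (x - 0) ≤ L₁ * |θ₁ - θ₂| := by
      rw [sub_zero]
      calc gronwallBound 0 K (M * |θ₁ - θ₂|) x
          ≤ gronwallBound 0 K (M * |θ₁ - θ₂|) 1 :=
            gronwallBound_mono_x le_rfl hK hMθ hx.2
        _ = M * |θ₁ - θ₂| / K * (Real.exp (K * 1) - 1) := by
            rw [gronwallBound_of_K_ne_0 hK.ne']; dsimp only; ring
        _ = (M * (Real.exp K - 1) / K) * |θ₁ - θ₂| := by
            rw [mul_one]; ring
        _ ≤ L₁ * |θ₁ - θ₂| :=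
            mul_le_mul_of_nonneg_right (le_max_left _ _) (abs_nonneg _)
    exact le_trans hkx hb
  refine ⟨fun x hx => le_trans (norm_fst_le (G x)) (hfinal x hx), ?_⟩
  exact le_trans (norm_snd_le (G 1)) (hfinal 1 (by norm_num))
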